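/- Let ρ, σ be d×d density matrices with ρ_{jk} ≠ 0 for all j,k, satisfying: (i) the diagonal of ρ UT-majorizes that of σ, and (ii) Q defined by Q_{jj} = min(σ_{jj}/ρ_{jj},1), Q_{jk} = σ_{jk}/ρ_{jk} (j≠k) is positive-semidefinite of rank 1. Then for any density matrix σ' with σ'_{jj} = σ_{jj} for all j such that ρ ↦ σ' is achievable by a cooling map, it holds that |σ'_{jk}| ≤ |σ_{jk}| for all j ≠ k. -/

import Mathlib

open Finset Matrix
open scoped ComplexOrder

lemma minor_eq_aux {d : ℕ} (Q : Matrix (Fin d) (Fin d) ℂ) (h : Q.rank ≤ 1) (a b : Fin d) :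
    Q a a * Q b b = Q a b * Q b a := by
  have h' : Module.finrank ℂ (LinearMap.range Q.mulVecLin) ≤ 1 := h
  obtain ⟨v, hv⟩ := finrank_le_one_iff.mp h'
  have hcol : ∀ k : Fin d, ∃ c : ℂ, ∀ j, Q j k = c * (v : Fin d → ℂ) j := by
    intro k
    obtain ⟨c, hc⟩ := hv ⟨Q.mulVec (Pi.single k 1), ⟨Pi.single k 1, rfl⟩⟩
    refine ⟨c, fun j => ?_⟩
    have h2 := congrFun (congrArg Subtype.val hc) j
    simp only [Submodule.coe_smul, Pi.smul_apply, smul_eq_mul] at h2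
    rw [h2, Matrix.mulVec_single]
    simp
  obtain ⟨ca, hca⟩ := hcol a
  obtain ⟨cb, hcb⟩ := hcol b
  rw [hca a, hca b, hcb a, hcb b]; ring

lemma unit_conj_aux {d : ℕ} (j k a b : Fin d) (M : Matrix (Fin d) (Fin d) ℂ) :
    (Matrix.single j k (1:ℂ) * M * (Matrix.single j k (1:ℂ))ᴴ) a b =
    if a = j ∧ b = j then M k k else 0 := by
  by_cases ha : a = j <;> by_cases hb : b = j <;>
    simp [Matrix.mul_apply, Matrix.single, Matrix.conjTranspose_apply, apply_ite, ite_and,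
      Finset.sum_ite_eq, Finset.sum_ite_eq', ha, hb] <;> try tauto

lemma entry_aux {d n : ℕ} (lam : Fin d → Fin n → ℂ) (mu : Fin d → Fin d → ℂ)
    (M : Matrix (Fin d) (Fin d) ℂ) (a b : Fin d) :
    ((∑ i, (Matrix.diagonal fun j => lam j i) * M * (Matrix.diagonal fun j => lam j i)ᴴ) +
      ∑ j, ∑ k, if j < k then
        (mu j k • Matrix.single j k (1 : ℂ)) * M *
          (mu j k • Matrix.single j k (1 : ℂ))ᴴ
      else 0) a b =
    (∑ i, lam a i * star (lam b i)) * M a b +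
      if a = b then ∑ k, (if a < k then (mu a k * star (mu a k)) * M k k else 0) else 0 := by
  have h1 : (∑ i, (Matrix.diagonal fun j => lam j i) * M *
      (Matrix.diagonal fun j => lam j i)ᴴ) a b = (∑ i, lam a i * star (lam b i)) * M a b := by
    rw [Matrix.sum_apply, Finset.sum_mul]
    refine Finset.sum_congr rfl fun i _ => ?_
    simp only [Matrix.diagonal_conjTranspose, Matrix.mul_diagonal, Matrix.diagonal_mul,
      Pi.star_apply]
    ring
  have h2 : (∑ j, ∑ k, if j < k then
      (mu j k • Matrix.single j k (1 : ℂ)) * M *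
        (mu j k • Matrix.single j k (1 : ℂ))ᴴ else 0) a b =
      if a = b then ∑ k, (if a < k then (mu a k * star (mu a k)) * M k k else 0) else 0 := by
    rw [Matrix.sum_apply]
    have hterm : ∀ j : Fin d, (∑ k, if j < k then
        (mu j k • Matrix.single j k (1 : ℂ)) * M *
          (mu j k • Matrix.single j k (1 : ℂ))ᴴ else 0) a b =
        if a = j ∧ b = j then ∑ k, (if j < k then (mu j k * star (mu j k)) * M k k else 0)
        else 0 := by
      intro j
      rw [Matrix.sum_apply]
      by_cases hab : a = j ∧ b = j
      · rw [if_pos hab]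
        refine Finset.sum_congr rfl fun k _ => ?_
        by_cases hjk : j < k
        · rw [if_pos hjk, if_pos hjk]
          simp only [Matrix.smul_mul, Matrix.conjTranspose_smul, Matrix.mul_smul,
            Matrix.smul_apply, smul_eq_mul, unit_conj_aux, if_pos hab]
          ring
        · rw [if_neg hjk, if_neg hjk, Matrix.zero_apply]
      · rw [if_neg hab]
        refine Finset.sum_eq_zero fun k _ => ?_
        by_cases hjk : j < k
        · rw [if_pos hjk]
          simp only [Matrix.smul_mul, Matrix.conjTranspose_smul, Matrix.mul_smul,
            Matrix.smul_apply, smul_eq_mul, unit_conj_aux, if_neg hab, mul_zero]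
        · rw [if_neg hjk, Matrix.zero_apply]
    simp only [hterm]
    by_cases hab : a = b
    · subst hab
      rw [Finset.sum_eq_single a (fun j _ hj => by rw [if_neg (by tauto)]) (by simp)]
      simp
    · rw [if_neg hab]
      refine Finset.sum_eq_zero fun j _ => ?_
      rw [if_neg (by rintro ⟨rfl, rfl⟩; exact hab rfl)]
  rw [Matrix.add_apply, h1, h2]

/-- A cooling map: a trace-preserving map admitting a Kraus decomposition into
diagonal operators and multiples of matrix units `|j⟩⟨k|` with `j < k`. -/
def IsCoolingMap {d : ℕ} (E : Matrix (Fin d) (Fin d) ℂ → Matrix (Fin d) (Fin d) ℂ) : Prop :=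
  ∃ (n : ℕ) (lam : Fin d → Fin n → ℂ) (mu : Fin d → Fin d → ℂ),
    (∀ ρ, E ρ =
      (∑ i, (Matrix.diagonal fun j => lam j i) * ρ * (Matrix.diagonal fun j => lam j i)ᴴ) +
      ∑ j, ∑ k, if j < k then
        (mu j k • Matrix.single j k (1 : ℂ)) * ρ *
          (mu j k • Matrix.single j k (1 : ℂ))ᴴ
      else 0) ∧
    (∀ ρ, (E ρ).trace = ρ.trace)

theorem optimal_coherence_transfer
    (d : ℕ) (ρ σ : Matrix (Fin d) (Fin d) ℂ)
    (hρ : ρ.PosSemidef) (hρtr : ρ.trace = 1)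
    (hσ : σ.PosSemidef) (hσtr : σ.trace = 1)
    (hρne : ∀ j k, ρ j k ≠ 0)
    (Q : Matrix (Fin d) (Fin d) ℂ)
    (hQ : ∀ j k : Fin d, Q j k =
      if j = k then ((min ((σ j j).re / (ρ j j).re) 1 : ℝ) : ℂ)
      else σ j k / ρ j k)
    (hmaj : ∀ m : Fin d, 1 ≤ m.val →
      ∑ j ∈ univ.filter (fun j => m ≤ j), (σ j j).re ≤
        ∑ j ∈ univ.filter (fun j => m ≤ j), (ρ j j).re)
    (hQpsd : Q.PosSemidef) (hQrank : Q.rank = 1)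
    (σ' : Matrix (Fin d) (Fin d) ℂ)
    (hσ' : σ'.PosSemidef) (hσ'tr : σ'.trace = 1)
    (hdiag : ∀ j : Fin d, σ' j j = σ j j)
    (E : Matrix (Fin d) (Fin d) ℂ → Matrix (Fin d) (Fin d) ℂ)
    (hE : IsCoolingMap E) (hEρ : E ρ = σ') :
    ∀ j k : Fin d, j ≠ k → ‖σ' j k‖ ≤ ‖σ j k‖ := by
  obtain ⟨n, lam, mu, hrep, htr⟩ := hE
  have hEntry : ∀ (M : Matrix (Fin d) (Fin d) ℂ) (a b : Fin d), E M a b =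
      (∑ i, lam a i * star (lam b i)) * M a b +
        if a = b then ∑ k, (if a < k then (mu a k * star (mu a k)) * M k k else 0) else 0 := by
    intro M a b
    rw [hrep M]
    exact entry_aux lam mu M a b
  -- diagonal entries of PSD matrices
  have hdnn : ∀ (A : Matrix (Fin d) (Fin d) ℂ), A.PosSemidef → ∀ a,
      0 ≤ (A a a).re ∧ (A a a).im = 0 := by
    intro A hA a
    have h := hA.diag_nonneg (i := a)
    exact ⟨(Complex.nonneg_iff.mp h).1, ((Complex.nonneg_iff.mp h).2).symm⟩
  have hρpos : ∀ a, 0 < (ρ a a).re := by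
    intro a
    rcases (hdnn ρ hρ a) with ⟨h1, h2⟩
    rcases h1.lt_or_eq with h | h
    · exact h
    · exact absurd (Complex.ext h.symm h2) (hρne a a)
  -- N a = squared norm of lam row a
  set N : Fin d → ℝ := fun a => ∑ i, Complex.normSq (lam a i) with hN
  have hNsum : ∀ a, (∑ i, lam a i * star (lam a i)) = ((N a : ℝ) : ℂ) := by
    intro a
    rw [hN]
    push_cast
    exact Finset.sum_congr rfl fun i _ => (Complex.mul_conj _)
  have hNnn : ∀ a, 0 ≤ N a := fun a => Finset.sum_nonneg fun i _ => Complex.normSq_nonneg _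
  -- diagonal bound from hEρ
  have hdiagbd : ∀ a, N a * (ρ a a).re ≤ (σ a a).re := by
    intro a
    have h := hEntry ρ a a
    rw [hEρ, hdiag a, if_pos rfl, hNsum a] at h
    have hre := congrArg Complex.re h
    have hT : 0 ≤ (∑ k, (if a < k then (mu a k * star (mu a k)) * ρ k k else 0)).re := by
      rw [Complex.re_sum]
      refine Finset.sum_nonneg fun k _ => ?_
      by_cases hak : a < k
      · rw [if_pos hak, Complex.star_def, Complex.mul_conj]
        simp only [Complex.mul_re, Complex.ofReal_re, Complex.ofReal_im, zero_mul, sub_zero]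
        exact mul_nonneg (Complex.normSq_nonneg _) (hdnn ρ hρ k).1
      · simp [hak]
    have hmul : (((N a : ℝ) : ℂ) * ρ a a).re = N a * (ρ a a).re := by
      simp [Complex.mul_re]
    rw [Complex.add_re, hmul] at hre
    linarith
  -- trace bound
  have htrb : ∀ c, N c ≤ 1 := by
    intro c
    have h1 := htr (Matrix.single c c 1)
    have htr2 : (Matrix.single c c (1:ℂ)).trace = 1 := by
      simp [Matrix.trace, Matrix.diag, Matrix.single, Finset.sum_ite_eq']
    rw [htr2, Matrix.trace] at h1
    simp only [Matrix.diag, hEntry, if_pos rfl] at h1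
    have hstd : ∀ a b : Fin d, Matrix.single c c (1:ℂ) a b = if a = c ∧ b = c then 1 else 0 :=
      fun a b => by
        by_cases h1 : a = c <;> by_cases h2 : b = c <;>
          simp [Matrix.single, h1, h2] <;> tauto
    have hin : ∀ a : Fin d, (∑ k, if a < k then
        (mu a k * star (mu a k)) * Matrix.single c c (1:ℂ) k k else 0) =
        if a < c then mu a c * star (mu a c) else 0 := by
      intro a
      rw [Finset.sum_eq_single c (fun k _ hk => by
        by_cases hak : a < k
        · rw [if_pos hak, hstd, if_neg (by tauto), mul_zero]
        · rw [if_neg hak]) (by simp)]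
      by_cases hac : a < c
      · rw [if_pos hac, if_pos hac, hstd, if_pos ⟨rfl, rfl⟩, mul_one]
      · rw [if_neg hac, if_neg hac]
    simp only [hin] at h1
    have hfirst : ∀ a : Fin d, (∑ i, lam a i * star (lam a i)) * Matrix.single c c (1:ℂ) a a =
        if a = c then ((N a : ℝ) : ℂ) else 0 := by
      intro a
      rw [hstd, hNsum]
      by_cases hac : a = c
      · rw [if_pos ⟨hac, hac⟩, if_pos hac, mul_one]
      · rw [if_neg (by tauto), if_neg hac, mul_zero]
    simp only [hfirst] at h1
    simp only [ite_true] at h1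
    rw [Finset.sum_add_distrib, Finset.sum_ite_eq' univ c (fun a => ((N a : ℝ) : ℂ)),
      if_pos (Finset.mem_univ c)] at h1
    have hre := congrArg Complex.re h1
    rw [Complex.add_re, Complex.ofReal_re, Complex.one_re] at hre
    have hR : 0 ≤ (∑ a, if a < c then mu a c * star (mu a c) else 0).re := by
      rw [Complex.re_sum]
      refine Finset.sum_nonneg fun a _ => ?_
      by_cases hac : a < c
      · rw [if_pos hac, Complex.star_def, Complex.mul_conj, Complex.ofReal_re]
        exact Complex.normSq_nonneg _
      · simp [hac]
    linarith
  -- Cauchy–Schwarz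
  have hCS : ∀ a b, ‖∑ i, lam a i * star (lam b i)‖ ≤
      Real.sqrt (N a) * Real.sqrt (N b) := by
    intro a b
    set x : Fin d → EuclideanSpace ℂ (Fin n) :=
      fun cc => (WithLp.equiv 2 (Fin n → ℂ)).symm (lam cc) with hx
    have hxapp : ∀ cc i, x cc i = lam cc i := fun cc i => rfl
    have key := norm_inner_le_norm (𝕜 := ℂ) (x b) (x a)
    have hinner : (inner ℂ (x b) (x a) : ℂ) = ∑ i, lam a i * star (lam b i) := by
      rw [PiLp.inner_apply]
      exact Finset.sum_congr rfl fun i _ => by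
        rw [RCLike.inner_apply, hxapp, hxapp]
        rfl
    have hnrm : ∀ cc : Fin d, ‖x cc‖ = Real.sqrt (N cc) := by
      intro cc
      rw [EuclideanSpace.norm_eq]
      simp only [hN]
      congr 1
      refine Finset.sum_congr rfl fun i _ => ?_
      rw [hxapp, Complex.sq_norm]
    rw [hinner, hnrm, hnrm] at key
    calc ‖∑ i, lam a i * star (lam b i)‖
        = ‖∑ i, lam a i * star (lam b i)‖ := rfl
      _ ≤ Real.sqrt (N b) * Real.sqrt (N a) := key
      _ = Real.sqrt (N a) * Real.sqrt (N b) := mul_comm _ _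
  -- bound N by Q diagonal
  have hNq : ∀ c, N c ≤ min ((σ c c).re / (ρ c c).re) 1 :=
    fun c => le_min ((le_div_iff₀ (hρpos c)).mpr (hdiagbd c)) (htrb c)
  have hqnn : ∀ c, 0 ≤ min ((σ c c).re / (ρ c c).re) 1 :=
    fun c => le_min (div_nonneg (hdnn σ hσ c).1 (hρpos c).le) zero_le_one
  -- main goal
  intro a b hab
  have h1 : σ' a b = (∑ i, lam a i * star (lam b i)) * ρ a b := by
    have h := hEntry ρ a b
    rwa [hEρ, if_neg hab, add_zero] at h
  have hherm : Q b a = star (Q a b) := by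
    have h2 := congrFun (congrFun hQpsd.1 a) b
    rw [Matrix.conjTranspose_apply] at h2
    rw [← h2, star_star]
  have hminor := minor_eq_aux Q (le_of_eq hQrank) a b
  rw [hherm, hQ a a, hQ b b, if_pos rfl, if_pos rfl, Complex.star_def, Complex.mul_conj]
    at hminor
  have hqq : min ((σ a a).re / (ρ a a).re) 1 * min ((σ b b).re / (ρ b b).re) 1 =
      Complex.normSq (Q a b) := by exact_mod_cast hminor
  have habs : Real.sqrt (min ((σ a a).re / (ρ a a).re) 1 * min ((σ b b).re / (ρ b b).re) 1) =
      ‖Q a b‖ := by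
    rw [hqq, Complex.normSq_eq_norm_sq, Real.sqrt_sq (norm_nonneg _)]
  have hQab : Q a b = σ a b / ρ a b := by rw [hQ a b, if_neg hab]
  calc ‖σ' a b‖
      = ‖∑ i, lam a i * star (lam b i)‖ * ‖ρ a b‖ := by
        rw [h1, norm_mul]
    _ ≤ (Real.sqrt (N a) * Real.sqrt (N b)) * ‖ρ a b‖ :=
        mul_le_mul_of_nonneg_right (hCS a b) (norm_nonneg _)
    _ ≤ (Real.sqrt (min ((σ a a).re / (ρ a a).re) 1) *
          Real.sqrt (min ((σ b b).re / (ρ b b).re) 1)) * ‖ρ a b‖ :=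
        mul_le_mul_of_nonneg_right
          (mul_le_mul (Real.sqrt_le_sqrt (hNq a)) (Real.sqrt_le_sqrt (hNq b))
            (Real.sqrt_nonneg _) (Real.sqrt_nonneg _)) (norm_nonneg _)
    _ = ‖Q a b‖ * ‖ρ a b‖ := by
        rw [← Real.sqrt_mul (hqnn a), habs]
    _ = ‖σ a b‖ := by
        rw [hQab, norm_div, div_mul_cancel₀ _ (norm_ne_zero_iff.mpr (hρne a b))]
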